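/- For every real α with 1/2 < α < 1, the supremum over P ∈ ℝ² of the integral ∫_{ℝ²} dκ 1/((1+|κ|²)(1+|P-κ|²)^{(1-α)/2}) is finite. -/

import Mathlib

open MeasureTheory

/-- squared Euclidean norm on ℝ² -/
def nsq (x : ℝ × ℝ) : ℝ := x.1^2 + x.2^2

lemma nsq_nonneg (x : ℝ × ℝ) : 0 ≤ nsq x := by
  unfold nsq; positivity

lemma norm_sq_le_nsq (x : ℝ × ℝ) : ‖x‖^2 ≤ nsq x := by
  rw [Prod.norm_def, Real.norm_eq_abs, Real.norm_eq_abs]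
  unfold nsq
  rcases max_cases |x.1| |x.2| with ⟨h, _⟩ | ⟨h, _⟩ <;> rw [h] <;>
    nlinarith [sq_abs x.1, sq_abs x.2, sq_nonneg x.1, sq_nonneg x.2]

lemma continuous_nsq : Continuous nsq := by
  unfold nsq; fun_prop

lemma g_integrable {β : ℝ} (hβ : 0 < β) :
    Integrable (fun x : ℝ × ℝ => (1 + nsq x) ^ (-(1+β))) volume := by
  have hd : (Module.finrank ℝ (ℝ × ℝ) : ℝ) < 2 + 2*β := by
    simp [Module.finrank_prod]; linarith
  have hInt := integrable_rpow_neg_one_add_norm_sq (E := ℝ × ℝ) (μ := volume)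
      (r := 2 + 2*β) hd
  refine hInt.mono' ?_ ?_
  · exact ((continuous_const.add continuous_nsq).rpow_const
      (fun x => Or.inl (by have := nsq_nonneg x; show (1:ℝ) + nsq x ≠ 0; positivity))).aestronglyMeasurable
  · refine Filter.Eventually.of_forall (fun x => ?_)
    have hx : (0:ℝ) < 1 + nsq x := by have := nsq_nonneg x; positivity
    have hn : (0:ℝ) < 1 + ‖x‖^2 := by positivity
    rw [Real.norm_eq_abs, abs_of_nonneg (by positivity)]
    have : -(2 + 2*β) / 2 = -(1+β) := by ring
    rw [this]
    exact Real.rpow_le_rpow_of_nonpos hn (by have := norm_sq_le_nsq x; linarith)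
      (by linarith)

theorem stmt0 (α : ℝ) (h1 : 1/2 < α) (h2 : α < 1) :
    ∃ C : ℝ, ∀ P : ℝ × ℝ,
      (∫ κ : ℝ × ℝ, 1 / ((1 + nsq κ) * (1 + nsq (P - κ)) ^ ((1 - α) / 2))) ≤ C := by
  set β : ℝ := (1 - α) / 2 with hβdef
  have hβ : 0 < β := by simp only [hβdef]; linarith
  have hg := g_integrable hβ
  refine ⟨2 * ∫ x : ℝ × ℝ, (1 + nsq x) ^ (-(1+β)), fun P => ?_⟩
  have hgP : Integrable (fun κ : ℝ × ℝ => (1 + nsq (P - κ)) ^ (-(1+β))) volume :=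
    hg.comp_sub_left P
  -- pointwise bound
  have hbound : ∀ κ : ℝ × ℝ,
      1 / ((1 + nsq κ) * (1 + nsq (P - κ)) ^ β) ≤
        (1 + nsq κ) ^ (-(1+β)) + (1 + nsq (P - κ)) ^ (-(1+β)) := by
    intro κ
    set A := 1 + nsq κ with hA
    set B := 1 + nsq (P - κ) with hB
    have hA1 : (1:ℝ) ≤ A := by have := nsq_nonneg κ; simp [hA]; linarith
    have hB1 : (1:ℝ) ≤ B := by have := nsq_nonneg (P - κ); simp [hB]; linarith
    have hA0 : (0:ℝ) < A := by linarith
    have hB0 : (0:ℝ) < B := by linarith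
    rcases le_total A B with h | h
    · have h1 : A ^ (1+β) ≤ A * B ^ β := by
        rw [Real.rpow_add hA0, Real.rpow_one]
        exact mul_le_mul_of_nonneg_left (Real.rpow_le_rpow hA0.le h hβ.le)
          hA0.le
      have h2 : 1 / (A * B ^ β) ≤ A ^ (-(1+β)) := by
        rw [Real.rpow_neg hA0.le, ← one_div]
        apply one_div_le_one_div_of_le (by positivity) h1
      have h3 : (0:ℝ) ≤ B ^ (-(1+β)) := by positivity
      linarith
    · have h1 : B ^ (1+β) ≤ A * B ^ β := by
        rw [Real.rpow_add hB0, Real.rpow_one]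
        exact mul_le_mul_of_nonneg_right h (by positivity)
      have h2 : 1 / (A * B ^ β) ≤ B ^ (-(1+β)) := by
        rw [Real.rpow_neg hB0.le, ← one_div]
        apply one_div_le_one_div_of_le (by positivity) h1
      have h3 : (0:ℝ) ≤ A ^ (-(1+β)) := by positivity
      linarith
  -- integrability of the integrand
  have hcont : Continuous fun κ : ℝ × ℝ =>
      1 / ((1 + nsq κ) * (1 + nsq (P - κ)) ^ β) := by
    apply Continuous.div continuous_const
    · exact (continuous_const.add continuous_nsq).mul
        (((continuous_const.add (continuous_nsq.comp (continuous_const.sub continuous_id))).rpow_const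
          (fun x => Or.inl (by have := nsq_nonneg (P - x); show (1:ℝ) + nsq (P - x) ≠ 0; positivity))))
    · intro x
      have h1 := nsq_nonneg x
      have h2 := nsq_nonneg (P - x)
      positivity
  have hf : Integrable (fun κ : ℝ × ℝ =>
      1 / ((1 + nsq κ) * (1 + nsq (P - κ)) ^ β)) volume := by
    refine (hg.add hgP).mono' hcont.aestronglyMeasurable ?_
    refine Filter.Eventually.of_forall (fun κ => ?_)
    rw [Real.norm_eq_abs, abs_of_nonneg]
    · exact hbound κ
    · have h1 := nsq_nonneg κ
      have h2 := nsq_nonneg (P - κ)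
      positivity
  calc (∫ κ : ℝ × ℝ, 1 / ((1 + nsq κ) * (1 + nsq (P - κ)) ^ β))
      ≤ ∫ κ : ℝ × ℝ, ((1 + nsq κ) ^ (-(1+β)) + (1 + nsq (P - κ)) ^ (-(1+β))) :=
        integral_mono hf (hg.add hgP) hbound
    _ = (∫ x : ℝ × ℝ, (1 + nsq x) ^ (-(1+β)))
        + ∫ κ : ℝ × ℝ, (1 + nsq (P - κ)) ^ (-(1+β)) := integral_add hg hgP
    _ = 2 * ∫ x : ℝ × ℝ, (1 + nsq x) ^ (-(1+β)) := by
        rw [integral_sub_left_eq_self (fun x : ℝ × ℝ => (1 + nsq x) ^ (-(1+β))) volume P]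
        ring
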